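/- Conversely, if z ∈ ℂ \ ℝ and π is a Hermitian projection with 0 < rank π < n, and g_{z,π}(λ) = π + ((λ - z̄)/(λ - z))(I - π) satisfies g_{z,π}(-λ)ᵗ g_{z,π}(λ) = I for all λ in its domain, then z is purely imaginary and π̄ = π. -/

import Mathlib

open Matrix

/-- The simple element `g_{z,π}(λ) = π + ((λ - z̄)/(λ - z))(I - π)`. -/
noncomputable def gSimple {n : ℕ} (z : ℂ) (P : Matrix (Fin n) (Fin n) ℂ) (lam : ℂ) :
    Matrix (Fin n) (Fin n) ℂ :=
  P + ((lam - (starRingEnd ℂ) z) / (lam - z)) • ((1 : Matrix (Fin n) (Fin n) ℂ) - P)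

theorem stmt_3 {n : ℕ} (P : Matrix (Fin n) (Fin n) ℂ) (hP : P * P = P) (hPherm : Pᴴ = P)
    (hP0 : P ≠ 0) (hP1 : P ≠ 1) (z : ℂ) (hz : z.im ≠ 0)
    (hσ : ∀ lam : ℂ, lam ≠ z → lam ≠ (starRingEnd ℂ) z → -lam ≠ z → -lam ≠ (starRingEnd ℂ) z →
      (gSimple z P (-lam))ᵀ * gSimple z P lam = 1) :
    z.re = 0 ∧ P.map (starRingEnd ℂ) = P := by
  set w := (starRingEnd ℂ) z with hw
  set Q := Pᵀ with hQ
  set B := Q * (1 - P) with hB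
  set C := (1 - Q) * P with hC
  set D := (1 - Q) * (1 - P) with hD
  -- nonvanishing facts
  have him : ∀ u : ℂ, u.im ≠ 0 → u ≠ 0 := fun u h hu => h (by simp [hu])
  have hwim : w.im = -z.im := by simp [hw]
  have h1z : (1 : ℂ) - z ≠ 0 := him _ (by simp [hz])
  have h1z' : (-1 : ℂ) - z ≠ 0 := him _ (by simp [hz])
  have h2z : (2 : ℂ) - z ≠ 0 := him _ (by simp [hz])
  have h2z' : (-2 : ℂ) - z ≠ 0 := him _ (by simp [hz])
  have hzw : z - w ≠ 0 := him _ (by simp [hwim]; intro h; exact hz (by linarith))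
  have hreal : ∀ r : ℂ, r.im = 0 →
      Q * P + ((r - w)/(r - z)) • B + ((-r - w)/(-r - z)) • C
        + (((-r - w)/(-r - z)) * ((r - w)/(r - z))) • D = 1 := by
    intro r hr
    have h := hσ r ?_ ?_ ?_ ?_
    case refine_1 | refine_2 | refine_3 | refine_4 =>
      intro h; apply hz
      have h2 := congrArg Complex.im h
      simp [hr, hw, Complex.conj_im] at h2 ⊢
      linarith
    · rw [← h]
      simp only [gSimple, transpose_add, transpose_smul, transpose_sub, transpose_one, ← hQ,
        ← hw]
      rw [add_mul, mul_add, mul_add, Matrix.smul_mul, Matrix.mul_smul, Matrix.smul_mul,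
        mul_smul_comm, smul_smul]
      rw [← hB, ← hC, ← hD]
      abel
  have hsum : Q * P + B + C + D = 1 := by
    rw [hB, hC, hD]; noncomm_ring
  have h1 := hreal 1 (by simp)
  have h2 := hreal 2 (by simp)
  -- subtracted, rescaled equations
  have E1 : (-(1+z)) • B + (1-z) • C + (-(z+w)) • D = 0 := by
    have hc1 : ((z^2-1)/(z-w)) * ((1-w)/(1-z) - 1) = -(1+z) := by
      field_simp
      ring
    have hc2 : ((z^2-1)/(z-w)) * ((-1-w)/(-1-z) - 1) = 1-z := by
      field_simp
      ring
    have hc3 : ((z^2-1)/(z-w)) * ((-1-w)/(-1-z) * ((1-w)/(1-z)) - 1) = -(z+w) := by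
      field_simp
      ring
    calc (-(1+z)) • B + (1-z) • C + (-(z+w)) • D
        = (((z^2-1)/(z-w)) * (((1:ℂ)-w)/((1:ℂ)-z) - 1)) • B
          + (((z^2-1)/(z-w)) * ((-1-w)/(-1-z) - 1)) • C
          + (((z^2-1)/(z-w)) * ((-1-w)/(-1-z) * (((1:ℂ)-w)/((1:ℂ)-z)) - 1)) • D := by
          rw [hc1, hc2, hc3]
      _ = ((z^2-1)/(z-w)) • ((Q * P + (((1:ℂ) - w)/((1:ℂ) - z)) • B + ((-1-w)/(-1-z)) • C
          + (((-1-w)/(-1-z)) * (((1:ℂ)-w)/((1:ℂ)-z))) • D) - (Q * P + B + C + D)) := by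
          module
      _ = ((z^2-1)/(z-w)) • ((1 : Matrix (Fin n) (Fin n) ℂ) - 1) := by
          rw [h1, hsum]
      _ = 0 := by simp
  have E2 : (-(2+z)) • B + (2-z) • C + (-(z+w)) • D = 0 := by
    have hc1 : ((z^2-4)/(z-w)) * ((2-w)/(2-z) - 1) = -(2+z) := by
      field_simp
      ring
    have hc2 : ((z^2-4)/(z-w)) * ((-2-w)/(-2-z) - 1) = 2-z := by
      field_simp
      ring
    have hc3 : ((z^2-4)/(z-w)) * ((-2-w)/(-2-z) * ((2-w)/(2-z)) - 1) = -(z+w) := by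
      field_simp
      ring
    calc (-(2+z)) • B + (2-z) • C + (-(z+w)) • D
        = (((z^2-4)/(z-w)) * ((2-w)/(2-z) - 1)) • B
          + (((z^2-4)/(z-w)) * ((-2-w)/(-2-z) - 1)) • C
          + (((z^2-4)/(z-w)) * ((-2-w)/(-2-z) * ((2-w)/(2-z)) - 1)) • D := by
          rw [hc1, hc2, hc3]
      _ = ((z^2-4)/(z-w)) • ((Q * P + (((2:ℂ) - w)/((2:ℂ) - z)) • B + ((-2-w)/(-2-z)) • C
          + (((-2-w)/(-2-z)) * (((2:ℂ)-w)/((2:ℂ)-z))) • D) - (Q * P + B + C + D)) := by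
          module
      _ = ((z^2-4)/(z-w)) • ((1 : Matrix (Fin n) (Fin n) ℂ) - 1) := by
          rw [h2, hsum]
      _ = 0 := by simp
  have hCB : C - B = 0 := by
    calc C - B = ((-(2+z)) • B + (2-z) • C + (-(z+w)) • D)
        - ((-(1+z)) • B + (1-z) • C + (-(z+w)) • D) := by module
      _ = 0 := by rw [E1, E2]; simp
  have hCB' : C = B := sub_eq_zero.mp hCB
  have hQP : P = Q := by
    have h4 : (1-Q)*P = Q*(1-P) := by rw [← hB, ← hC]; exact hCB'
    rw [mul_one_sub, one_sub_mul] at h4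
    exact sub_left_inj.mp h4
  have hBzero : B = 0 := by rw [hB, ← hQP, mul_one_sub, hP, sub_self]
  have hDval : D = 1 - P := by
    rw [hD, ← hQP, mul_one_sub, sub_mul, one_mul, hP, sub_self, sub_zero]
  have hzw0 : z + w = 0 := by
    rw [hBzero, hCB', hBzero, hDval] at E1
    simp only [smul_zero, add_zero, zero_add] at E1
    have h1P : (1 : Matrix (Fin n) (Fin n) ℂ) - P ≠ 0 := sub_ne_zero.mpr (Ne.symm hP1)
    rcases smul_eq_zero.mp E1 with h | h
    · exact neg_eq_zero.mp h
    · exact absurd h h1P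
  constructor
  · have := congrArg Complex.re hzw0
    simp [hw] at this
    linarith
  · ext i j
    have h5 := congrFun (congrFun hPherm i) j
    have h6 := congrFun (congrFun hQP j) i
    simp only [conjTranspose_apply, transpose_apply] at h5 h6
    rw [h6] at h5
    simpa [hQ] using h5
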